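/- arXiv:2602.11859 — 4 statements merged into one kernel-verified Lean document; each statement's English description precedes it below -/
import Mathlib

section
/- Fix s ∈ X and N ≥ 1. Every unit flow θ to depth N satisfies 𝔈_s(θ) ≥ ∑_{k=0}^{N−1} m^k/(u_{2k+1}(s) − u_{2k}(s)) in [0,∞], where a summand with zero denominator is +∞. Consequently, the effective resistance satisfies R_N(s) ≥ ∑_{k=0}^{N−1} m^k/(u_{2k+1}(s) − u_{2k}(s)), and if the series ∑_{k=0}^∞ m^k/(u_{2k+1}(s) − u_{2k}(s)) diverges, then R_N(s) → ∞ as N → ∞. -/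
open Filter Topology
open scoped BigOperators ComplexOrder ENNReal

/-- A kernel `J : X × X → ℂ` is positive definite: every finite Gram sum
`∑ conj (c α) * c β * J (s α) (s β)` is a nonnegative real number
(using the partial order on `ℂ`). -/
def IsPD {X : Type*} (J : X → X → ℂ) : Prop :=
  ∀ (r : ℕ) (c : Fin r → ℂ) (p : Fin r → X),
    0 ≤ ∑ α, ∑ β, (starRingEnd ℂ) (c α) * c β * J (p α) (p β)

/-- The pullback operator `(LJ)(s,t) = ∑ i, J (φ i s) (φ i t)`. -/
noncomputable def pullback {X : Type*} (m : ℕ) (φ : Fin m → X → X) (J : X → X → ℂ) :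
    X → X → ℂ :=
  fun s t => ∑ i, J (φ i s) (φ i t)

/-- For a word `w = i₁⋯iₙ ∈ {1,…,m}ⁿ`, `phiW φ w = φ_{iₙ} ∘ ⋯ ∘ φ_{i₁}`. -/
def phiW {X : Type*} {m : ℕ} (φ : Fin m → X → X) : {n : ℕ} → (Fin n → Fin m) → X → X
  | 0, _, x => x
  | n + 1, w, x => φ (w (Fin.last n)) (phiW φ (fun i => w i.castSucc) x)

/-- The tower `K₀ = K`, `K_{n+1} = L Kₙ`. -/
noncomputable def tower {X : Type*} (m : ℕ) (φ : Fin m → X → X) (K : X → X → ℂ) :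
    ℕ → X → X → ℂ
  | 0 => K
  | n + 1 => pullback m φ (tower m φ K n)

/-- The diagonal `uₙ(s) = Kₙ(s,s)` (a real number, as `Kₙ` is p.d.). -/
noncomputable def diag {X : Type*} (m : ℕ) (φ : Fin m → X → X) (K : X → X → ℂ)
    (n : ℕ) (s : X) : ℝ :=
  (tower m φ K n s s).re

/-- The diagonal increment `a_s(w) = u_{|w|+1}(φ_w s) − u_{|w|}(φ_w s)`. -/
noncomputable def incr {X : Type*} (m : ℕ) (φ : Fin m → X → X) (K : X → X → ℂ)
    (s : X) {k : ℕ} (w : Fin k → Fin m) : ℝ :=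
  diag m φ K (k + 1) (phiW φ w s) - diag m φ K k (phiW φ w s)

/-- A unit flow to depth `N` on the rooted `m`-ary word tree:
`θ k w i` is the flow through the edge `(w, wi)` with `|w| = k`. -/
def IsUnitFlow (m N : ℕ) (θ : (k : ℕ) → (Fin k → Fin m) → Fin m → ℝ) : Prop :=
  (∀ k, k < N → ∀ (w : Fin k → Fin m) (i : Fin m), 0 ≤ θ k w i) ∧
  (∑ i : Fin m, θ 0 (fun j => j.elim0) i = 1) ∧
  (∀ k, k + 1 < N → ∀ (w : Fin k → Fin m) (i : Fin m),
    θ k w i = ∑ j : Fin m, θ (k + 1) (Fin.snoc w i) j)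

/-- The energy `𝔈_s(θ) = ∑_e θ(e)² / c_s(e) ∈ [0,∞]`, where the edge `(w,wi)`
has conductance `c_s(w,wi) = a_s(w)/m^{|w|+1}` (with `0/0 = 0` and `x/0 = ∞`
for `x > 0`, as in `ℝ≥0∞`). -/
noncomputable def energy {X : Type*} (m : ℕ) (φ : Fin m → X → X) (K : X → X → ℂ)
    (s : X) (N : ℕ) (θ : (k : ℕ) → (Fin k → Fin m) → Fin m → ℝ) : ℝ≥0∞ :=
  ∑ k ∈ Finset.range N, ∑ w : Fin k → Fin m, ∑ i : Fin m,
    ENNReal.ofReal (θ k w i) ^ 2 / ENNReal.ofReal (incr m φ K s w / (m : ℝ) ^ (k + 1))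

/-- The effective resistance `R_N(s)`: infimum of the energy over unit flows to depth `N`. -/
noncomputable def resistance {X : Type*} (m : ℕ) (φ : Fin m → X → X) (K : X → X → ℂ)
    (s : X) (N : ℕ) : ℝ≥0∞ :=
  ⨅ (θ : (k : ℕ) → (Fin k → Fin m) → Fin m → ℝ) (_ : IsUnitFlow m N θ),
    energy m φ K s N θ

/-- The scalar series `S(s) = ∑ₖ m^k / (u_{2k+1}(s) − u_{2k}(s)) ∈ [0,∞]`
(a term with zero denominator being `+∞`). -/
noncomputable def Sser {X : Type*} (m : ℕ) (φ : Fin m → X → X) (K : X → X → ℂ)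
    (s : X) : ℝ≥0∞ :=
  ∑' k : ℕ,
    (m : ℝ≥0∞) ^ k / ENNReal.ofReal (diag m φ K (2 * k + 1) s - diag m φ K (2 * k) s)


section Aux

open Filter Topology
open scoped BigOperators ComplexOrder ENNReal NNReal

/-- Two-term Sedrakyan (Engel form / Titu) inequality in `ℝ≥0∞`. -/
lemma ennreal_sq_div_add (a b c d : ℝ≥0∞) :
    (a + b) ^ 2 / (c + d) ≤ a ^ 2 / c + b ^ 2 / d := by
  rcases eq_or_ne c 0 with rfl | hc0
  · rcases eq_or_ne a 0 with rfl | ha0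
    · simp
    · have h : a ^ 2 / (0:ℝ≥0∞) = ⊤ := ENNReal.div_zero (pow_ne_zero 2 ha0)
      simp [h]
  rcases eq_or_ne d 0 with rfl | hd0
  · rcases eq_or_ne b 0 with rfl | hb0
    · simp
    · have h : b ^ 2 / (0:ℝ≥0∞) = ⊤ := ENNReal.div_zero (pow_ne_zero 2 hb0)
      simp [h]
  rcases eq_or_ne c ⊤ with rfl | hct
  · simp [ENNReal.div_top]
  rcases eq_or_ne d ⊤ with rfl | hdt
  · simp [ENNReal.div_top]
  rcases eq_or_ne a ⊤ with rfl | hat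
  · have h : (⊤:ℝ≥0∞) ^ 2 / c = ⊤ := by
      rw [ENNReal.top_pow (by norm_num), ENNReal.top_div_of_ne_top hct]
    rw [h]; simp
  rcases eq_or_ne b ⊤ with rfl | hbt
  · have h : (⊤:ℝ≥0∞) ^ 2 / d = ⊤ := by
      rw [ENNReal.top_pow (by norm_num), ENNReal.top_div_of_ne_top hdt]
    rw [h]; simp
  lift a to ℝ≥0 using hat
  lift b to ℝ≥0 using hbt
  lift c to ℝ≥0 using hct
  lift d to ℝ≥0 using hdt
  have hc' : c ≠ 0 := by exact_mod_cast hc0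
  have hd' : d ≠ 0 := by exact_mod_cast hd0
  have hcd : c + d ≠ 0 := by
    intro h
    exact hc' (add_eq_zero.mp h).1
  rw [← ENNReal.coe_add, ← ENNReal.coe_add, ← ENNReal.coe_pow, ← ENNReal.coe_pow,
    ← ENNReal.coe_pow, ← ENNReal.coe_div hcd, ← ENNReal.coe_div hc', ← ENNReal.coe_div hd',
    ← ENNReal.coe_add, ENNReal.coe_le_coe, ← NNReal.coe_le_coe]
  have hcR : (0:ℝ) < c := NNReal.coe_pos.mpr hc'.bot_lt
  have hdR : (0:ℝ) < d := NNReal.coe_pos.mpr hd'.bot_lt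
  push_cast
  rw [div_add_div _ _ (ne_of_gt hcR) (ne_of_gt hdR),
    div_le_div_iff₀ (by positivity) (by positivity)]
  nlinarith [sq_nonneg ((a:ℝ) * d - (b:ℝ) * c), mul_pos hcR hdR,
    NNReal.coe_nonneg a, NNReal.coe_nonneg b]

/-- Sedrakyan's inequality in `ℝ≥0∞`. -/
lemma ennreal_sedrakyan {ι : Type*} (s : Finset ι) (x c : ι → ℝ≥0∞) :
    (∑ i ∈ s, x i) ^ 2 / (∑ i ∈ s, c i) ≤ ∑ i ∈ s, x i ^ 2 / c i := by
  classical
  induction s using Finset.induction with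
  | empty => simp
  | @insert _ _ h ih =>
    rw [Finset.sum_insert h, Finset.sum_insert h, Finset.sum_insert h]
    exact le_trans (ennreal_sq_div_add _ _ _ _) (add_le_add_right ih _)

lemma isPD_pullback {X : Type*} (m : ℕ) (φ : Fin m → X → X) {J : X → X → ℂ}
    (hJ : IsPD J) : IsPD (pullback m φ J) := by
  intro r c p
  have hswap : ∀ (f : Fin r → Fin r → Fin m → ℂ),
      ∑ α, ∑ β, ∑ i, f α β i = ∑ i, ∑ α, ∑ β, f α β i := by
    intro f
    have h1 : ∀ α, ∑ β, ∑ i, f α β i = ∑ i, ∑ β, f α β i := fun α => Finset.sum_comm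
    simp_rw [h1]
    exact Finset.sum_comm
  have h : ∑ α, ∑ β, (starRingEnd ℂ) (c α) * c β * pullback m φ J (p α) (p β)
      = ∑ i : Fin m, ∑ α, ∑ β, (starRingEnd ℂ) (c α) * c β * J (φ i (p α)) (φ i (p β)) := by
    simp_rw [pullback, Finset.mul_sum]
    exact hswap _
  rw [h]
  exact Finset.sum_nonneg fun i _ => hJ r c fun α => φ i (p α)

lemma IsPD.diag_re_nonneg {X : Type*} {J : X → X → ℂ} (hJ : IsPD J) (t : X) :
    0 ≤ (J t t).re := by
  have h := hJ 1 (fun _ => 1) (fun _ => t)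
  simp only [map_one, one_mul, Fin.sum_univ_one] at h
  exact (Complex.le_def.mp h).1

lemma isPD_tower_sub {X : Type*} (m : ℕ) (φ : Fin m → X → X) (K : X → X → ℂ)
    (hsub : IsPD (fun s t => pullback m φ K s t - K s t)) (n : ℕ) :
    IsPD (fun s t => tower m φ K (n + 1) s t - tower m φ K n s t) := by
  induction n with
  | zero => exact hsub
  | succ n ih =>
    have h := isPD_pullback m φ ih
    have heq : (pullback m φ fun s t => tower m φ K (n + 1) s t - tower m φ K n s t)
        = fun s t => tower m φ K (n + 2) s t - tower m φ K (n + 1) s t := by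
      funext s t
      simp [pullback, tower, Finset.sum_sub_distrib]
    rwa [heq] at h

lemma diag_mono {X : Type*} (m : ℕ) (φ : Fin m → X → X) (K : X → X → ℂ)
    (hsub : IsPD (fun s t => pullback m φ K s t - K s t)) (n : ℕ) (t : X) :
    diag m φ K n t ≤ diag m φ K (n + 1) t := by
  have h := (isPD_tower_sub m φ K hsub n).diag_re_nonneg t
  simp only [Complex.sub_re] at h
  simp only [diag]
  linarith

lemma phiW_snoc {X : Type*} {m k : ℕ} (φ : Fin m → X → X) (w : Fin k → Fin m)
    (i : Fin m) (x : X) : phiW φ (Fin.snoc w i) x = φ i (phiW φ w x) := by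
  simp only [phiW, Fin.snoc_last, Fin.snoc_castSucc]

lemma tower_add {X : Type*} (m : ℕ) (φ : Fin m → X → X) (K : X → X → ℂ) (k : ℕ) :
    ∀ (n : ℕ) (s t : X), tower m φ K (n + k) s t
      = ∑ w : Fin k → Fin m, tower m φ K n (phiW φ w s) (phiW φ w t) := by
  induction k with
  | zero =>
    intro n s t
    haveI : Unique (Fin 0 → Fin m) := ⟨⟨fun j => j.elim0⟩, fun f => funext fun j => j.elim0⟩
    rw [Fintype.sum_unique]
    rfl
  | succ k ih =>
    intro n s t
    have hn : n + (k + 1) = (n + 1) + k := by ring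
    rw [hn, ih (n + 1) s t]
    rw [← (Fin.snocEquiv (fun _ => Fin m)).sum_comp
      (fun w => tower m φ K n (phiW φ w s) (phiW φ w t)), Fintype.sum_prod_type]
    rw [Finset.sum_comm]
    refine Finset.sum_congr rfl fun w _ => ?_
    rw [show tower m φ K (n + 1) = pullback m φ (tower m φ K n) from rfl]
    simp only [pullback]
    refine Finset.sum_congr rfl fun i _ => ?_
    have he : (Fin.snocEquiv (fun _ => Fin m)) (i, w) = Fin.snoc w i := by
      funext j; simp [Fin.snocEquiv]
    rw [he, phiW_snoc, phiW_snoc]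

lemma diag_add {X : Type*} (m : ℕ) (φ : Fin m → X → X) (K : X → X → ℂ) (k n : ℕ) (s : X) :
    diag m φ K (n + k) s = ∑ w : Fin k → Fin m, diag m φ K n (phiW φ w s) := by
  simp only [diag, tower_add m φ K k n s s, Complex.re_sum]

lemma incr_sum {X : Type*} (m : ℕ) (φ : Fin m → X → X) (K : X → X → ℂ) (k : ℕ) (s : X) :
    ∑ w : Fin k → Fin m, incr m φ K s w
      = diag m φ K (2 * k + 1) s - diag m φ K (2 * k) s := by
  have h1 : diag m φ K (2 * k + 1) s
      = ∑ w : Fin k → Fin m, diag m φ K (k + 1) (phiW φ w s) := by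
    rw [← diag_add m φ K k (k + 1) s]; congr 1; ring
  have h2 : diag m φ K (2 * k) s = ∑ w : Fin k → Fin m, diag m φ K k (phiW φ w s) := by
    rw [← diag_add m φ K k k s]; congr 1; ring
  rw [h1, h2, ← Finset.sum_sub_distrib]
  rfl

lemma flow_level_sum {m N : ℕ} {θ : (k : ℕ) → (Fin k → Fin m) → Fin m → ℝ}
    (hθ : IsUnitFlow m N θ) : ∀ k, k < N →
      ∑ w : Fin k → Fin m, ∑ i : Fin m, θ k w i = 1 := by
  intro k
  induction k with
  | zero =>
    intro _
    haveI : Unique (Fin 0 → Fin m) := ⟨⟨fun j => j.elim0⟩, fun f => funext fun j => j.elim0⟩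
    rw [Fintype.sum_unique]
    have hd : (default : Fin 0 → Fin m) = fun j => j.elim0 := funext fun j => j.elim0
    rw [hd]
    exact hθ.2.1
  | succ k ih =>
    intro hk
    rw [← (Fin.snocEquiv (fun _ => Fin m)).sum_comp (fun w => ∑ j : Fin m, θ (k + 1) w j),
      Fintype.sum_prod_type, Finset.sum_comm]
    have hs : ∀ (w : Fin k → Fin m) (i : Fin m),
        ∑ j : Fin m, θ (k + 1) ((Fin.snocEquiv (fun _ => Fin m)) (i, w)) j = θ k w i := by
      intro w i
      have he : (Fin.snocEquiv (fun _ => Fin m)) (i, w) = Fin.snoc w i := by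
        funext j; simp [Fin.snocEquiv]
      rw [he]
      exact (hθ.2.2 k hk w i).symm
    simp_rw [hs]
    exact ih (Nat.lt_of_succ_lt hk)

end Aux

/-- Cutset lower bound for the energy of any unit flow, the resulting lower bound on
the effective resistance, and divergence of `R_N(s)` when the series diverges. -/
theorem stmt2 {X : Type*} (m : ℕ) (hm : 1 ≤ m) (φ : Fin m → X → X)
    (K : X → X → ℂ) (hK : IsPD K)
    (hsub : IsPD (fun s t => pullback m φ K s t - K s t))
    (s : X) :
    (∀ N : ℕ, 1 ≤ N → ∀ θ, IsUnitFlow m N θ →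
      ∑ k ∈ Finset.range N,
          (m : ℝ≥0∞) ^ k / ENNReal.ofReal (diag m φ K (2 * k + 1) s - diag m φ K (2 * k) s)
        ≤ energy m φ K s N θ) ∧
    (∀ N : ℕ, 1 ≤ N →
      ∑ k ∈ Finset.range N,
          (m : ℝ≥0∞) ^ k / ENNReal.ofReal (diag m φ K (2 * k + 1) s - diag m φ K (2 * k) s)
        ≤ resistance m φ K s N) ∧
    (Sser m φ K s = ⊤ →
      Tendsto (fun N => resistance m φ K s N) atTop (𝓝 ⊤)) := by
  have hmR : (0:ℝ) < m := by exact_mod_cast Nat.lt_of_lt_of_le Nat.zero_lt_one hm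
  have hmE0 : (m : ℝ≥0∞) ≠ 0 := Nat.cast_ne_zero.mpr (Nat.one_le_iff_ne_zero.mp hm)
  have hmEt : (m : ℝ≥0∞) ≠ ⊤ := ENNReal.natCast_ne_top m
  have part1 : ∀ N : ℕ, 1 ≤ N → ∀ θ, IsUnitFlow m N θ →
      ∑ k ∈ Finset.range N,
          (m : ℝ≥0∞) ^ k / ENNReal.ofReal (diag m φ K (2 * k + 1) s - diag m φ K (2 * k) s)
        ≤ energy m φ K s N θ := by
    intro N hN θ hθ
    unfold energy
    refine Finset.sum_le_sum fun k hkr => ?_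
    have hk : k < N := Finset.mem_range.mp hkr
    have hincr : ∀ w : Fin k → Fin m, 0 ≤ incr m φ K s w := fun w =>
      sub_nonneg.mpr (diag_mono m φ K hsub k (phiW φ w s))
    have hden : ∀ w : Fin k → Fin m,
        ENNReal.ofReal (incr m φ K s w / (m:ℝ) ^ (k + 1))
          = ENNReal.ofReal (incr m φ K s w) / (m : ℝ≥0∞) ^ (k + 1) := by
      intro w
      rw [ENNReal.ofReal_div_of_pos (by positivity), ENNReal.ofReal_pow hmR.le,
        ENNReal.ofReal_natCast]
    have key := ennreal_sedrakyan (Finset.univ : Finset ((Fin k → Fin m) × Fin m))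
      (fun p => ENNReal.ofReal (θ k p.1 p.2))
      (fun p => ENNReal.ofReal (incr m φ K s p.1) / (m : ℝ≥0∞) ^ (k + 1))
    have hx : ∑ p : (Fin k → Fin m) × Fin m, ENNReal.ofReal (θ k p.1 p.2) = 1 := by
      rw [Fintype.sum_prod_type]
      have h1 : ∀ w : Fin k → Fin m, ∑ i : Fin m, ENNReal.ofReal (θ k w i)
          = ENNReal.ofReal (∑ i : Fin m, θ k w i) :=
        fun w => (ENNReal.ofReal_sum_of_nonneg fun i _ => hθ.1 k hk w i).symm
      simp_rw [h1]
      rw [← ENNReal.ofReal_sum_of_nonneg fun w _ => Finset.sum_nonneg fun i _ => hθ.1 k hk w i,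
        flow_level_sum hθ k hk, ENNReal.ofReal_one]
    have hc : ∑ p : (Fin k → Fin m) × Fin m,
          ENNReal.ofReal (incr m φ K s p.1) / (m : ℝ≥0∞) ^ (k + 1)
        = ENNReal.ofReal (diag m φ K (2 * k + 1) s - diag m φ K (2 * k) s)
            / (m : ℝ≥0∞) ^ k := by
      rw [Fintype.sum_prod_type]
      have h2 : ∀ w : Fin k → Fin m,
          (∑ _i : Fin m, ENNReal.ofReal (incr m φ K s w) / (m : ℝ≥0∞) ^ (k + 1))
            = ENNReal.ofReal (incr m φ K s w) / (m : ℝ≥0∞) ^ k := by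
        intro w
        rw [Finset.sum_const, Finset.card_univ, Fintype.card_fin, nsmul_eq_mul,
          pow_succ, ← mul_div_assoc, mul_comm ((m : ℝ≥0∞) ^ k) (m : ℝ≥0∞),
          ENNReal.mul_div_mul_left _ _ hmE0 hmEt]
      simp_rw [h2, div_eq_mul_inv]
      rw [← Finset.sum_mul, ← ENNReal.ofReal_sum_of_nonneg fun w _ => hincr w,
        incr_sum m φ K k s]
    rw [hx, hc, one_pow, one_div,
      ENNReal.inv_div (Or.inl (ENNReal.pow_ne_top hmEt)) (Or.inl (pow_ne_zero k hmE0))] at key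
    have hgoal : (∑ w : Fin k → Fin m, ∑ i : Fin m, ENNReal.ofReal (θ k w i) ^ 2 /
          ENNReal.ofReal (incr m φ K s w / (m:ℝ) ^ (k + 1)))
        = ∑ p : (Fin k → Fin m) × Fin m, ENNReal.ofReal (θ k p.1 p.2) ^ 2 /
            (ENNReal.ofReal (incr m φ K s p.1) / (m : ℝ≥0∞) ^ (k + 1)) := by
      rw [Fintype.sum_prod_type]
      exact Finset.sum_congr rfl fun w _ => Finset.sum_congr rfl fun i _ => by rw [hden]
    rw [hgoal]
    exact key
  have part2 : ∀ N : ℕ, 1 ≤ N →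
      ∑ k ∈ Finset.range N,
          (m : ℝ≥0∞) ^ k / ENNReal.ofReal (diag m φ K (2 * k + 1) s - diag m φ K (2 * k) s)
        ≤ resistance m φ K s N := by
    intro N hN
    unfold resistance
    exact le_iInf fun θ => le_iInf fun hθ => part1 N hN θ hθ
  refine ⟨part1, part2, ?_⟩
  intro hS
  have h1 : Tendsto (fun N => ∑ k ∈ Finset.range N,
      (m : ℝ≥0∞) ^ k / ENNReal.ofReal (diag m φ K (2 * k + 1) s - diag m φ K (2 * k) s))
      atTop (𝓝 ⊤) := by
    have h := ENNReal.tendsto_nat_tsum (fun k =>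
      (m : ℝ≥0∞) ^ k / ENNReal.ofReal (diag m φ K (2 * k + 1) s - diag m φ K (2 * k) s))
    unfold Sser at hS
    rwa [hS] at h
  refine tendsto_nhds_top_mono h1 ?_
  filter_upwards [Filter.eventually_ge_atTop 1] with N hN
  exact part2 N hN
end

section
/- Fix s,t ∈ X_fin. Then the series ∑_{n=0}^∞ |K_{n+1}(s,t) − K_n(s,t)| converges; in particular the limit K_∞(s,t) := lim_{n→∞} K_n(s,t) exists as a finite complex number. -/
open Filter Topology
open scoped BigOperators ComplexOrder ENNReal

/-- The finiteness locus `X_fin = {s : u_∞(s) = lim uₙ(s) < ∞}` (the monotone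
sequence `uₙ(s)` has a finite limit). -/
def Xfin {X : Type*} (m : ℕ) (φ : Fin m → X → X) (K : X → X → ℂ) : Set X :=
  {s | ∃ l : ℝ, Filter.Tendsto (fun n => diag m φ K n s) Filter.atTop (nhds l)}

lemma pd_diag {X : Type*} {J : X → X → ℂ} (h : IsPD J) (s : X) : 0 ≤ J s s := by
  have := h 1 (fun _ => 1) (fun _ => s)
  simpa using this

lemma pd_two {X : Type*} {J : X → X → ℂ} (h : IsPD J) (s t : X) (z : ℂ) :
    0 ≤ J s s + z * J s t + (starRingEnd ℂ) z * J t s + (starRingEnd ℂ) z * z * J t t := by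
  have := h 2 ![1, z] ![s, t]
  simpa [Fin.sum_univ_two, add_assoc] using this

lemma pd_herm {X : Type*} {J : X → X → ℂ} (h : IsPD J) (s t : X) :
    J t s = (starRingEnd ℂ) (J s t) := by
  have ha := pd_diag h s
  have hd := pd_diag h t
  have h1 := pd_two h s t 1
  have hI := pd_two h s t Complex.I
  rw [Complex.le_def] at ha hd h1 hI
  apply Complex.ext <;> simp [Complex.ext_iff, Complex.add_im, Complex.mul_im] at * <;> nlinarith [ha.2, hd.2, h1.2, hI.2]

lemma pd_bound {X : Type*} {J : X → X → ℂ} (h : IsPD J) (s t : X) :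
    ‖J s t‖ ≤ ((J s s).re + (J t t).re) / 2 := by
  have ha := pd_diag h s
  have hd := pd_diag h t
  rw [Complex.le_def] at ha hd
  simp only [Complex.zero_re, Complex.zero_im] at ha hd
  by_cases hb : J s t = 0
  · simp [hb]
    linarith [ha.1, hd.1]
  · set b := J s t with hbdef
    have habs : (0:ℝ) < ‖b‖ := by
      simpa [norm_pos_iff] using hb
    have habs' : (‖b‖ : ℂ) ≠ 0 := by exact_mod_cast habs.ne'
    have h2 := pd_two h s t (-(starRingEnd ℂ) b / (‖b‖ : ℂ))
    rw [pd_herm h s t, Complex.le_def] at h2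
    have hre := h2.1
    have e1 : (-(starRingEnd ℂ) b / (‖b‖ : ℂ)) * b = -(‖b‖ : ℂ) := by
      rw [div_mul_eq_mul_div, neg_mul, mul_comm, Complex.mul_conj, Complex.normSq_eq_norm_sq]
      push_cast
      field_simp
    have e2 : (starRingEnd ℂ) (-(starRingEnd ℂ) b / (‖b‖ : ℂ)) * (starRingEnd ℂ) b
        = -(‖b‖ : ℂ) := by
      rw [← map_mul, div_mul_eq_mul_div, neg_mul, mul_comm, Complex.mul_conj,
        Complex.normSq_eq_norm_sq, map_div₀, map_neg]
      push_cast
      simp [Complex.conj_ofReal]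
      field_simp
    have e3 : (starRingEnd ℂ) (-(starRingEnd ℂ) b / (‖b‖ : ℂ))
        * (-(starRingEnd ℂ) b / (‖b‖ : ℂ)) * J t t = J t t := by
      rw [map_div₀, map_neg, Complex.conj_conj, Complex.conj_ofReal,
        div_mul_div_comm, neg_mul_neg, Complex.mul_conj, Complex.normSq_eq_norm_sq]
      rw [show ((‖b‖ : ℂ) * (‖b‖ : ℂ)) = ((‖b‖)^2 : ℝ) by push_cast; ring]
      rw [div_self (by exact_mod_cast pow_ne_zero 2 habs.ne'), one_mul]
    rw [e1, e2, e3] at hre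
    simp only [Complex.add_re, Complex.neg_re, Complex.ofReal_re, Complex.zero_re] at hre
    linarith

lemma pd_pullback {X : Type*} (m : ℕ) (φ : Fin m → X → X) {J : X → X → ℂ} (h : IsPD J) :
    IsPD (pullback m φ J) := by
  intro r c p
  have key : ∑ α, ∑ β, (starRingEnd ℂ) (c α) * c β * pullback m φ J (p α) (p β)
      = ∑ i, ∑ α, ∑ β, (starRingEnd ℂ) (c α) * c β * J (φ i (p α)) (φ i (p β)) := by
    simp only [pullback, Finset.mul_sum]
    rw [Finset.sum_congr rfl fun α _ => Finset.sum_comm]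
    exact Finset.sum_comm
  rw [key]
  exact Finset.sum_nonneg fun i _ => h r c fun α => φ i (p α)

lemma pd_tower_diff {X : Type*} (m : ℕ) (φ : Fin m → X → X) {K : X → X → ℂ}
    (hsub : IsPD (fun s t => pullback m φ K s t - K s t)) (n : ℕ) :
    IsPD (fun s t => tower m φ K (n + 1) s t - tower m φ K n s t) := by
  induction n with
  | zero => exact hsub
  | succ n ih =>
    have heq : (fun s t => tower m φ K (n + 2) s t - tower m φ K (n + 1) s t)
        = pullback m φ (fun s t => tower m φ K (n + 1) s t - tower m φ K n s t) := by
      funext x y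
      show tower m φ K (n+2) x y - tower m φ K (n+1) x y = _
      simp only [tower, pullback, Finset.sum_sub_distrib]
    rw [heq]
    exact pd_pullback m φ ih

/-- For `s, t ∈ X_fin`, the series of absolute increments of `Kₙ(s,t)` converges;
in particular `K_∞(s,t) = lim Kₙ(s,t)` exists in `ℂ`. -/
theorem stmt6 {X : Type*} (m : ℕ) (hm : 1 ≤ m) (φ : Fin m → X → X)
    (K : X → X → ℂ) (hK : IsPD K)
    (hsub : IsPD (fun s t => pullback m φ K s t - K s t))
    (s t : X) (hs : s ∈ Xfin m φ K) (ht : t ∈ Xfin m φ K) :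
    Summable (fun n : ℕ => ‖tower m φ K (n + 1) s t - tower m φ K n s t‖) ∧
    ∃ l : ℂ, Tendsto (fun n => tower m φ K n s t) atTop (𝓝 l) := by
  have hD : ∀ n, IsPD (fun a b => tower m φ K (n + 1) a b - tower m φ K n a b) :=
    pd_tower_diff m φ hsub
  -- diagonal increments
  set g : X → ℕ → ℝ := fun x n => diag m φ K (n + 1) x - diag m φ K n x with hg
  have hg_eq : ∀ x n, (tower m φ K (n + 1) x x - tower m φ K n x x).re = g x n := by
    intro x n; simp [hg, diag, Complex.sub_re]
  have hg_nonneg : ∀ x n, 0 ≤ g x n := by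
    intro x n
    have := pd_diag (hD n) x
    rw [Complex.le_def] at this
    simpa [hg_eq x n] using this.1
  have hgsum : ∀ x, x ∈ Xfin m φ K → Summable (g x) := by
    rintro x ⟨l, hl⟩
    have hmono : Monotone (fun n => diag m φ K n x) :=
      monotone_nat_of_le_succ fun n => by
        have h := hg_nonneg x n; simp only [hg] at h; linarith
    refine summable_of_sum_range_le (c := l - diag m φ K 0 x) (hg_nonneg x) fun n => ?_
    have : ∑ i ∈ Finset.range n, g x i = diag m φ K n x - diag m φ K 0 x :=
      Finset.sum_range_sub (fun k => diag m φ K k x) n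
    rw [this]
    have hle := hmono.ge_of_tendsto hl n
    linarith
  have hgs := hgsum s hs
  have hgt := hgsum t ht
  have hbound : ∀ n, ‖tower m φ K (n + 1) s t - tower m φ K n s t‖
      ≤ (g s n + g t n) / 2 := by
    intro n
    have := pd_bound (hD n) s t
    simpa [hg_eq s n, hg_eq t n] using this
  have habs : Summable (fun n : ℕ =>
      ‖tower m φ K (n + 1) s t - tower m φ K n s t‖) := by
    refine Summable.of_nonneg_of_le (fun n => norm_nonneg _) hbound ?_
    exact (hgs.add hgt).div_const 2
  refine ⟨habs, ?_⟩
  have hsum : Summable (fun n : ℕ => tower m φ K (n + 1) s t - tower m φ K n s t) := by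
    apply Summable.of_norm
    simpa using habs
  refine ⟨tower m φ K 0 s t + ∑' n, (tower m φ K (n + 1) s t - tower m φ K n s t), ?_⟩
  have htend := hsum.hasSum.tendsto_sum_nat
  refine (tendsto_const_nhds.add htend).congr fun n => ?_
  rw [Finset.sum_range_sub (fun k => tower m φ K k s t) n]
  ring
end

section
/- Fix s ∈ Y and Γ ≥ 1, and suppose that for every n ≥ 0, max_{w∈W_n} u(φ_w(s)) ≤ Γ · min_{w∈W_n} u(φ_w(s)). Then B(s) := sup_{n≥0} m^n ∑_{w∈W_n} u(φ_w(s))² ≤ Γ · u(s)². -/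
open MeasureTheory Filter Topology
open scoped BigOperators ComplexOrder ENNReal

/-- Positive definiteness of a kernel restricted to a subset `Y ⊆ X`: every finite
Gram matrix at points of `Y` is positive semidefinite. -/
def IsPDOn {X : Type*} (Y : Set X) (J : X → X → ℂ) : Prop :=
  ∀ (r : ℕ) (c : Fin r → ℂ) (p : Fin r → X), (∀ α, p α ∈ Y) →
    0 ≤ ∑ α, ∑ β, (starRingEnd ℂ) (c α) * c β * J (p α) (p β)

/-- The sampled process `Mₙ(s,t;ω) = mⁿ J(φ_{ω|n}(s), φ_{ω|n}(t))`. -/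
noncomputable def Mart {X : Type*} (m : ℕ) (φ : Fin m → X → X) (J : X → X → ℂ)
    (s t : X) (n : ℕ) (ω : ℕ → Fin m) : ℂ :=
  (m : ℂ) ^ n *
    J (phiW φ (fun i : Fin n => ω (i : ℕ)) s) (phiW φ (fun i : Fin n => ω (i : ℕ)) t)

/-- The σ-algebra `Fₙ` on `Ω = {1,…,m}^ℕ` generated by the first `n` coordinates. -/
def Filt (m n : ℕ) : MeasurableSpace (ℕ → Fin m) :=
  MeasurableSpace.comap (fun ω => (fun i : Fin n => ω (i : ℕ))) inferInstance


/-- Level comparability of the diagonal values along the `φ`-tree rooted at `s`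
(`max_w u(φ_w s) ≤ Γ min_w u(φ_w s)` at every level) implies
`B(s) = sup_n mⁿ ∑_{w∈W_n} u(φ_w s)² ≤ Γ u(s)²`. -/
theorem stmt13 {X : Type*} (m : ℕ) (hm : 1 ≤ m) (φ : Fin m → X → X)
    (Y : Set X) (hY : ∀ i : Fin m, ∀ x ∈ Y, φ i x ∈ Y)
    (J : X → X → ℂ) (hJpd : IsPDOn Y J)
    (hJinv : ∀ s ∈ Y, ∀ t ∈ Y, ∑ i : Fin m, J (φ i s) (φ i t) = J s t)
    (s : X) (hs : s ∈ Y) (Γ : ℝ) (hΓ : 1 ≤ Γ)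
    (hcomp : ∀ n : ℕ, ∀ w v : Fin n → Fin m,
      (J (phiW φ w s) (phiW φ w s)).re ≤ Γ * (J (phiW φ v s) (phiW φ v s)).re) :
    ∀ n : ℕ,
      (m : ℝ) ^ n * ∑ w : Fin n → Fin m, ((J (phiW φ w s) (phiW φ w s)).re) ^ 2
        ≤ Γ * ((J s s).re) ^ 2 := by
  have hmem : ∀ n (w : Fin n → Fin m), phiW φ w s ∈ Y := by
    intro n
    induction n with
    | zero => intro w; exact hs
    | succ k ih => intro w; exact hY _ _ (ih _)
  have hdiag : ∀ x ∈ Y, 0 ≤ (J x x).re := by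
    intro x hx
    have h := hJpd 1 (fun _ => 1) (fun _ => x) (fun _ => hx)
    simp at h
    exact (Complex.le_def.mp h).1
  have hsum : ∀ n : ℕ,
      ∑ w : Fin n → Fin m, (J (phiW φ w s) (phiW φ w s)).re = (J s s).re := by
    intro n
    induction n with
    | zero => simp [phiW]
    | succ k ih =>
      rw [← Equiv.sum_comp (Fin.snocEquiv (fun _ => Fin m))
        (fun w => (J (phiW φ w s) (phiW φ w s)).re)]
      rw [Fintype.sum_prod_type_right]
      have hterm : ∀ (w' : Fin k → Fin m) (i : Fin m),
          phiW φ (Fin.snocEquiv (fun _ => Fin m) (i, w')) s = φ i (phiW φ w' s) := by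
        intro w' i
        show φ _ (phiW φ _ s) = _
        simp [Fin.snocEquiv]
      calc ∑ w' : Fin k → Fin m, ∑ i : Fin m,
            (J (phiW φ (Fin.snocEquiv (fun _ => Fin m) (i, w')) s)
               (phiW φ (Fin.snocEquiv (fun _ => Fin m) (i, w')) s)).re
          = ∑ w' : Fin k → Fin m, (J (phiW φ w' s) (phiW φ w' s)).re := by
            apply Finset.sum_congr rfl
            intro w' _
            simp only [hterm]
            rw [← Complex.re_sum, hJinv _ (hmem k w') _ (hmem k w')]
        _ = (J s s).re := ih
  intro n
  set u : (Fin n → Fin m) → ℝ := fun w => (J (phiW φ w s) (phiW φ w s)).re with hu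
  have hnn : ∀ w, 0 ≤ u w := fun w => hdiag _ (hmem n w)
  have hS : ∑ w, u w = (J s s).re := hsum n
  have key : ∀ v, ∑ w, (u w) ^ 2 ≤ Γ * u v * (J s s).re := by
    intro v
    rw [← hS, Finset.mul_sum]
    apply Finset.sum_le_sum
    intro w _
    have h1 : u w ≤ Γ * u v := hcomp n w v
    calc (u w) ^ 2 = u w * u w := sq (u w)
    _ ≤ (Γ * u v) * u w := mul_le_mul_of_nonneg_right h1 (hnn w)
  have hsumv := Finset.sum_le_sum (fun v (_ : v ∈ Finset.univ) => key v)
  have hcard : ∑ _v : Fin n → Fin m, ∑ w, (u w) ^ 2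
      = (m : ℝ) ^ n * ∑ w, (u w) ^ 2 := by
    rw [Finset.sum_const, nsmul_eq_mul]
    simp [Fintype.card_fun]
  have hrhs : ∑ v : Fin n → Fin m, Γ * u v * (J s s).re = Γ * ((J s s).re) ^ 2 := by
    rw [← Finset.sum_mul, ← Finset.mul_sum, hS]; ring
  rw [hcard, hrhs] at hsumv
  exact hsumv
end

section
/- Fix s,t ∈ Y with B(s) < ∞ and B(t) < ∞. Then for every n ≥ 0, ∫_Ω |M_n(s,t;ω)|² dμ(ω) = m^n ∑_{w∈W_n} |J(φ_w(s),φ_w(t))|² ≤ B(s)^{1/2} B(t)^{1/2}. In particular, the martingale (M_n(s,t;·))_{n≥0} is bounded in L²(Ω,μ). -/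
open MeasureTheory Filter Topology
open scoped BigOperators ComplexOrder ENNReal

/-- `B(x) = sup_n mⁿ ∑_{w ∈ W_n} u(φ_w x)² ∈ [0,∞]`, where `u(x) = J(x,x)`. -/
noncomputable def Bfun {X : Type*} (m : ℕ) (φ : Fin m → X → X) (J : X → X → ℂ)
    (x : X) : ℝ≥0∞ :=
  ⨆ n : ℕ, ENNReal.ofReal
    ((m : ℝ) ^ n * ∑ w : Fin n → Fin m, ((J (phiW φ w x) (phiW φ w x)).re) ^ 2)

section PD
variable {X : Type*} {Y : Set X} {J : X → X → ℂ}
lemma pd_diag_s14 (h : IsPDOn Y J) {a : X} (ha : a ∈ Y) : 0 ≤ J a a := by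
  have := h 1 (fun _ => 1) (fun _ => a) (fun _ => ha)
  simpa using this
lemma pd_two_s14 (h : IsPDOn Y J) {a b : X} (ha : a ∈ Y) (hb : b ∈ Y) (c0 c1 : ℂ) :
    0 ≤ (starRingEnd ℂ) c0 * c0 * J a a + (starRingEnd ℂ) c0 * c1 * J a b
      + (starRingEnd ℂ) c1 * c0 * J b a + (starRingEnd ℂ) c1 * c1 * J b b := by
  have := h 2 ![c0, c1] ![a, b] (by intro α; fin_cases α <;> assumption)
  simpa [Fin.sum_univ_two, add_assoc] using this
lemma pd_herm_s14 (h : IsPDOn Y J) {a b : X} (ha : a ∈ Y) (hb : b ∈ Y) :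
    J b a = (starRingEnd ℂ) (J a b) := by
  have hda := (Complex.le_def.1 (pd_diag_s14 h ha)).2
  have hdb := (Complex.le_def.1 (pd_diag_s14 h hb)).2
  simp only [Complex.zero_im] at hda hdb
  have h1 := (Complex.le_def.1 (pd_two_s14 h ha hb 1 1)).2
  have h2 := (Complex.le_def.1 (pd_two_s14 h ha hb 1 Complex.I)).2
  simp only [map_one, one_mul, mul_one, Complex.add_im, Complex.zero_im] at h1
  simp only [map_one, one_mul, mul_one, Complex.conj_I, Complex.I_mul_I, neg_mul,
    Complex.add_im, Complex.zero_im, Complex.mul_im, Complex.neg_im, Complex.neg_re,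
    Complex.I_re, Complex.I_im, Complex.one_re, Complex.one_im,
    zero_mul, mul_zero, one_mul, mul_one] at h2
  apply Complex.ext
  · simp only [Complex.conj_re]; linarith
  · simp only [Complex.conj_im]; linarith
lemma pd_cs (h : IsPDOn Y J) {a b : X} (ha : a ∈ Y) (hb : b ∈ Y) :
    ‖J a b‖ ^ 2 ≤ (J a a).re * (J b b).re := by
  set A := (J a a).re with hA
  set B := (J b b).re with hB
  set q := Complex.normSq (J a b) with hq
  have hA0 : 0 ≤ A := (Complex.le_def.1 (pd_diag_s14 h ha)).1
  have hB0 : 0 ≤ B := (Complex.le_def.1 (pd_diag_s14 h hb)).1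
  have hq0 : 0 ≤ q := Complex.normSq_nonneg _
  have key : ∀ r : ℝ, 0 ≤ r^2 * q * A + 2 * r * q + B := by
    intro r
    have h2 := (Complex.le_def.1 (pd_two_s14 h ha hb ((r : ℂ) * J a b) 1)).1
    have herm := pd_herm_s14 h ha hb
    have : (starRingEnd ℂ) ((r:ℂ) * J a b) * ((r:ℂ) * J a b) * J a a
        + (starRingEnd ℂ) ((r:ℂ) * J a b) * 1 * J a b
        + (starRingEnd ℂ) 1 * ((r:ℂ) * J a b) * J b a
        + (starRingEnd ℂ) 1 * 1 * J b b
        = ((r^2 * q : ℝ) : ℂ) * J a a + ((2 * r * q : ℝ) : ℂ) + J b b := by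
      rw [herm]
      have hzz : (starRingEnd ℂ) (J a b) * J a b = ((q : ℝ) : ℂ) := by
        rw [hq, Complex.normSq_eq_conj_mul_self]
      simp only [map_mul, Complex.conj_ofReal, map_one, one_mul, mul_one]
      push_cast
      linear_combination ((r:ℂ)^2 * J a a + 2*(r:ℂ)) * hzz
    rw [this] at h2
    simpa [Complex.add_re, Complex.mul_re, ← Complex.ofReal_pow, Complex.ofReal_re, Complex.ofReal_im] using h2
  have hqAB : q ≤ A * B := by
    rcases eq_or_lt_of_le hq0 with hq' | hq'
    · rw [← hq']; exact mul_nonneg hA0 hB0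
    rcases eq_or_lt_of_le hA0 with hA' | hA'
    · exfalso
      have hk := key (-(B + 1) / (2 * q))
      rw [← hA'] at hk
      have e2 : 2 * (-(B + 1) / (2 * q)) * q = -(B + 1) := by
        field_simp
      linarith [hk, e2]
    · have hk := key (-(1 / A))
      have hA'' : A ≠ 0 := ne_of_gt hA'
      have e1 : (-(1 / A))^2 * q * A = q / A := by field_simp
      have e2 : 2 * (-(1 / A)) * q = -(2 * (q / A)) := by field_simp
      rw [e1, e2] at hk
      have h3 : q / A ≤ B := by linarith
      have h4 : q ≤ B * A := (div_le_iff₀ hA').1 h3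
      linarith [h4, mul_comm A B]
  calc ‖J a b‖ ^ 2 = q := Complex.sq_norm _
    _ ≤ A * B := hqAB

end PD

lemma phiW_mem {X : Type*} {m : ℕ} (φ : Fin m → X → X) (Y : Set X)
    (hY : ∀ i : Fin m, ∀ x ∈ Y, φ i x ∈ Y) :
    ∀ {n : ℕ} (w : Fin n → Fin m) {x : X}, x ∈ Y → phiW φ w x ∈ Y := by
  intro n
  induction n with
  | zero => intro w x hx; exact hx
  | succ n ih => intro w x hx; exact hY _ _ (ih _ hx)

lemma integral_proj {m : ℕ} (n : ℕ) (μ : Measure (ℕ → Fin m))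
    [IsProbabilityMeasure μ]
    (hcyl : ∀ w : Fin n → Fin m,
      μ {ω | ∀ i : Fin n, ω (i : ℕ) = w i} = ((m : ℝ≥0∞))⁻¹ ^ n)
    (g : (Fin n → Fin m) → ℝ) :
    ∫ ω, g (fun i : Fin n => ω (i : ℕ)) ∂μ = ∑ w : Fin n → Fin m, ((m : ℝ)⁻¹) ^ n * g w := by
  have hproj : Measurable (fun ω : ℕ → Fin m => (fun i : Fin n => ω (i : ℕ))) :=
    measurable_pi_lambda _ (fun i => measurable_pi_apply _)
  have hmap : IsProbabilityMeasure (μ.map (fun ω : ℕ → Fin m => (fun i : Fin n => ω (i : ℕ)))) :=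
    Measure.isProbabilityMeasure_map hproj.aemeasurable
  rw [← integral_map hproj.aemeasurable (by
    exact (measurable_of_countable g).aestronglyMeasurable)]
  rw [integral_fintype (by exact Integrable.of_finite)]
  refine Finset.sum_congr rfl (fun w _ => ?_)
  have hpre : (fun ω : ℕ → Fin m => (fun i : Fin n => ω (i : ℕ))) ⁻¹' {w}
      = {ω | ∀ i : Fin n, ω (i : ℕ) = w i} := by
    ext ω; simp [funext_iff]
  unfold Measure.real
  rw [Measure.map_apply hproj (measurableSet_singleton w), hpre, hcyl w]
  rw [smul_eq_mul]
  congr 1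
  simp [ENNReal.toReal_pow, ENNReal.toReal_inv]


/-- `L²` bound: `∫ |Mₙ(s,t;·)|² dμ = mⁿ ∑_{w∈W_n} |J(φ_w s, φ_w t)|² ≤ B(s)^{1/2} B(t)^{1/2}`;
in particular the martingale is bounded in `L²(Ω,μ)`. -/
theorem stmt14 {X : Type*} (m : ℕ) (hm : 1 ≤ m) (φ : Fin m → X → X)
    (Y : Set X) (hY : ∀ i : Fin m, ∀ x ∈ Y, φ i x ∈ Y)
    (J : X → X → ℂ) (hJpd : IsPDOn Y J)
    (hJinv : ∀ s ∈ Y, ∀ t ∈ Y, ∑ i : Fin m, J (φ i s) (φ i t) = J s t)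
    (μ : Measure (ℕ → Fin m)) (hprob : IsProbabilityMeasure μ)
    (hcyl : ∀ (n : ℕ) (w : Fin n → Fin m),
      μ {ω | ∀ i : Fin n, ω (i : ℕ) = w i} = ((m : ℝ≥0∞))⁻¹ ^ n)
    (s t : X) (hs : s ∈ Y) (ht : t ∈ Y)
    (hBs : Bfun m φ J s < ⊤) (hBt : Bfun m φ J t < ⊤) :
    (∀ n : ℕ,
      ∫ ω, ‖Mart m φ J s t n ω‖ ^ 2 ∂μ
        = (m : ℝ) ^ n * ∑ w : Fin n → Fin m,
            ‖J (phiW φ w s) (phiW φ w t)‖ ^ 2) ∧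
    (∀ n : ℕ,
      ∫ ω, ‖Mart m φ J s t n ω‖ ^ 2 ∂μ
        ≤ Real.sqrt (Bfun m φ J s).toReal * Real.sqrt (Bfun m φ J t).toReal) ∧
    (∃ C : ℝ, ∀ n : ℕ, ∫ ω, ‖Mart m φ J s t n ω‖ ^ 2 ∂μ ≤ C) := by
  have hm0 : (0 : ℝ) < (m : ℝ) := by exact_mod_cast Nat.lt_of_lt_of_le Nat.zero_lt_one hm
  have part1 : ∀ n : ℕ,
      ∫ ω, ‖Mart m φ J s t n ω‖ ^ 2 ∂μ
        = (m : ℝ) ^ n * ∑ w : Fin n → Fin m,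
            ‖J (phiW φ w s) (phiW φ w t)‖ ^ 2 := by
    intro n
    have := integral_proj n μ (hcyl n)
      (fun w => ‖(m : ℂ) ^ n * J (phiW φ w s) (phiW φ w t)‖ ^ 2)
    rw [show (fun ω => ‖Mart m φ J s t n ω‖ ^ 2)
        = fun ω => ‖(m : ℂ) ^ n *
            J (phiW φ (fun i : Fin n => ω (i : ℕ)) s)
              (phiW φ (fun i : Fin n => ω (i : ℕ)) t)‖ ^ 2 from rfl]
    rw [this, Finset.mul_sum]
    refine Finset.sum_congr rfl (fun w _ => ?_)
    rw [norm_mul, norm_pow, Complex.norm_natCast, mul_pow, ← pow_mul]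
    rw [pow_mul, inv_pow, sq, mul_assoc ((m:ℝ)^n), inv_mul_cancel_left₀ (by positivity)]
  have part2 : ∀ n : ℕ,
      ∫ ω, ‖Mart m φ J s t n ω‖ ^ 2 ∂μ
        ≤ Real.sqrt (Bfun m φ J s).toReal * Real.sqrt (Bfun m φ J t).toReal := by
    intro n
    rw [part1 n]
    set us : (Fin n → Fin m) → ℝ := fun w => (J (phiW φ w s) (phiW φ w s)).re with hus
    set ut : (Fin n → Fin m) → ℝ := fun w => (J (phiW φ w t) (phiW φ w t)).re with hut
    have hus0 : ∀ w, 0 ≤ us w := fun w =>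
      (Complex.le_def.1 (pd_diag_s14 hJpd (phiW_mem φ Y hY w hs))).1
    have hut0 : ∀ w, 0 ≤ ut w := fun w =>
      (Complex.le_def.1 (pd_diag_s14 hJpd (phiW_mem φ Y hY w ht))).1
    have step1 : (m : ℝ) ^ n * ∑ w : Fin n → Fin m,
        ‖J (phiW φ w s) (phiW φ w t)‖ ^ 2
        ≤ (m : ℝ) ^ n * ∑ w : Fin n → Fin m, us w * ut w := by
      refine mul_le_mul_of_nonneg_left (Finset.sum_le_sum (fun w _ => ?_)) (by positivity)
      exact pd_cs hJpd (phiW_mem φ Y hY w hs) (phiW_mem φ Y hY w ht)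
    set a : ℝ := (m : ℝ) ^ n * ∑ w : Fin n → Fin m, us w ^ 2 with ha
    set b : ℝ := (m : ℝ) ^ n * ∑ w : Fin n → Fin m, ut w ^ 2 with hb
    have ha0 : 0 ≤ a := by
      refine mul_nonneg (by positivity) (Finset.sum_nonneg (fun w _ => by positivity))
    have hb0 : 0 ≤ b := by
      refine mul_nonneg (by positivity) (Finset.sum_nonneg (fun w _ => by positivity))
    have step2 : (m : ℝ) ^ n * ∑ w : Fin n → Fin m, us w * ut w
        ≤ Real.sqrt a * Real.sqrt b := by
      rw [← Real.sqrt_mul ha0]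
      rw [Real.le_sqrt (by
        refine mul_nonneg (by positivity)
          (Finset.sum_nonneg (fun w _ => mul_nonneg (hus0 w) (hut0 w))))]
      have := Finset.sum_mul_sq_le_sq_mul_sq Finset.univ us ut
      calc ((m : ℝ) ^ n * ∑ w : Fin n → Fin m, us w * ut w) ^ 2
          = (m : ℝ) ^ n * (m : ℝ) ^ n * (∑ w : Fin n → Fin m, us w * ut w) ^ 2 := by ring
        _ ≤ (m : ℝ) ^ n * (m : ℝ) ^ n *
            ((∑ w : Fin n → Fin m, us w ^ 2) * ∑ w : Fin n → Fin m, ut w ^ 2) := by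
            refine mul_le_mul_of_nonneg_left this (by positivity)
        _ = a * b := by rw [ha, hb]; ring
      exact mul_nonneg ha0 hb0
    have haB : a ≤ (Bfun m φ J s).toReal := by
      rw [← ENNReal.ofReal_le_iff_le_toReal hBs.ne]
      exact le_iSup (fun n : ℕ => ENNReal.ofReal
        ((m : ℝ) ^ n * ∑ w : Fin n → Fin m, ((J (phiW φ w s) (phiW φ w s)).re) ^ 2)) n
    have hbB : b ≤ (Bfun m φ J t).toReal := by
      rw [← ENNReal.ofReal_le_iff_le_toReal hBt.ne]
      exact le_iSup (fun n : ℕ => ENNReal.ofReal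
        ((m : ℝ) ^ n * ∑ w : Fin n → Fin m, ((J (phiW φ w t) (phiW φ w t)).re) ^ 2)) n
    calc (m : ℝ) ^ n * ∑ w : Fin n → Fin m,
        ‖J (phiW φ w s) (phiW φ w t)‖ ^ 2
        ≤ Real.sqrt a * Real.sqrt b := le_trans step1 step2
      _ ≤ Real.sqrt (Bfun m φ J s).toReal * Real.sqrt (Bfun m φ J t).toReal := by
          exact mul_le_mul (Real.sqrt_le_sqrt haB) (Real.sqrt_le_sqrt hbB)
            (Real.sqrt_nonneg _) (Real.sqrt_nonneg _)
  exact ⟨part1, part2, ⟨_, part2⟩⟩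
end
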